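/- Let A = e^{iπ/4} ∈ ℂ and Φ = {z ∈ ℂ : z⁸ = 1}. Let p, q, k, l be integers with l ≡ k + 2 (mod 4). Then there exists a pair (α, β) ∈ ℤ² such that the set {(z·p·Aᵏ, i·z·q·Aˡ) : z ∈ Φ} ∩ (ℤ × ℤ) (i.e., the set of those pairs both of whose coordinates are integers, identified with their integer values) equals {(α, β), (−α, −β)}; moreover, (α, β) is unique up to this simultaneous sign change: any (α', β') ∈ ℤ² with the same property satisfies (α', β') = (α, β) or (α', β') = (−α, −β). -/

import Mathlib

open Complex

/-- `A = e^{iπ/4}`, the primitive 8th root of unity. -/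
noncomputable def A : ℂ := Complex.exp (Real.pi * Complex.I / 4)

/-- The pair of integers `(u, v)` occurs as `(z·p·Aᵏ, i·z·q·Aˡ)` for some 8th root of
unity `z`. -/
def KrebesPair (p q k l : ℤ) (u v : ℤ) : Prop :=
  ∃ z : ℂ, z ^ 8 = 1 ∧ (u : ℂ) = z * (p : ℂ) * A ^ k ∧ (v : ℂ) = Complex.I * z * (q : ℂ) * A ^ l

lemma A_ne_zero : A ≠ 0 := Complex.exp_ne_zero _

lemma A_sq : A ^ (2:ℕ) = I := by
  rw [A, ← Complex.exp_nat_mul]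
  rw [show ((2:ℕ):ℂ) * (Real.pi * I / 4) = ((Real.pi/2 : ℝ):ℂ) * I by push_cast; ring,
    Complex.exp_mul_I, ← Complex.ofReal_cos, ← Complex.ofReal_sin,
    Real.cos_pi_div_two, Real.sin_pi_div_two]
  simp

lemma A_pow8 : A ^ (8:ℕ) = 1 := by
  rw [A, ← Complex.exp_nat_mul]
  rw [show ((8:ℕ):ℂ) * (Real.pi * I / 4) = 2 * (Real.pi:ℂ) * I by push_cast; ring,
    Complex.exp_two_pi_mul_I]

lemma A_zpow8 (k : ℤ) : (A ^ k) ^ (8:ℕ) = 1 := by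
  rw [← zpow_natCast (A ^ k) 8, ← zpow_mul, mul_comm, zpow_mul, zpow_natCast, A_pow8, one_zpow]

/-- A real eighth root of unity forced by an integer equation is `±1`. -/
lemma root_pm_one {w : ℂ} (hw : w ^ 8 = 1) {c : ℤ} (hc : c ≠ 0) {n : ℤ}
    (h : (n : ℂ) = (c : ℂ) * w) : w = 1 ∨ w = -1 := by
  have hc' : (c : ℂ) ≠ 0 := Int.cast_ne_zero.mpr hc
  have hwr : w = (((n : ℝ) / (c : ℝ) : ℝ) : ℂ) := by
    push_cast
    rw [h, mul_comm, mul_div_assoc, div_self hc', mul_one]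
  set r : ℝ := (n : ℝ) / (c : ℝ) with hr
  have hr8 : r ^ 8 = 1 := by
    have : ((r ^ 8 : ℝ) : ℂ) = ((1:ℝ) : ℂ) := by
      push_cast
      rw [← hwr]; simpa using hw
    exact_mod_cast this
  have h2 : (r - 1) * (r + 1) = 0 := by nlinarith [sq_nonneg (r^2-1), sq_nonneg (r^3-r), sq_nonneg (r^3+r), sq_nonneg (r^2+1), sq_nonneg r]
  rcases mul_eq_zero.mp h2 with h' | h'
  · left; rw [hwr, show r = 1 by linarith]; norm_num
  · right; rw [hwr, show r = -1 by linarith]; norm_num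

lemma key (p q k l : ℤ) (m : ℤ) (hm : l = k + 2 + 4 * m) (β : ℤ)
    (hβ : (β : ℂ) = -((-1:ℂ) ^ m) * (q : ℂ)) (u v : ℤ) :
    KrebesPair p q k l u v ↔
      ∃ w : ℂ, w ^ 8 = 1 ∧ (u : ℂ) = (p : ℂ) * w ∧ (v : ℂ) = (β : ℂ) * w := by
  have hAl : A ^ l = A ^ k * I * (-1:ℂ) ^ m := by
    rw [hm, zpow_add₀ A_ne_zero, zpow_add₀ A_ne_zero, zpow_mul]
    norm_num [A_sq, ← A_sq]
    left
    have h4 : A ^ (4:ℕ) = -1 := by rw [show (4:ℕ) = 2*2 by norm_num, pow_mul, A_sq, I_sq]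
    have h4' : A ^ (4:ℤ) = -1 := by rw [show ((4:ℤ)) = ((4:ℕ):ℤ) by norm_num, zpow_natCast, h4]
    simp only [h4, h4']
  constructor
  · rintro ⟨z, hz, hu, hv⟩
    refine ⟨z * A ^ k, ?_, by rw [hu]; ring, ?_⟩
    · rw [mul_pow, hz, one_mul, A_zpow8]
    · rw [hv, hAl, hβ]
      have : I * I = -1 := I_mul_I
      linear_combination (z * A ^ k * (q:ℂ) * (-1:ℂ)^m) * this
  · rintro ⟨w, hw, hu, hv⟩
    refine ⟨w * A ^ (-k), ?_, ?_, ?_⟩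
    · rw [mul_pow, hw, one_mul, A_zpow8]
    · rw [hu]
      have h1 : A ^ (-k) * A ^ k = 1 := by rw [← zpow_add₀ A_ne_zero]; simp
      linear_combination (-((p:ℂ) * w)) * h1
    · rw [hv, hβ, hAl]
      have h1 : A ^ (-k) * A ^ k = 1 := by rw [← zpow_add₀ A_ne_zero]; simp
      have hI : I * I = -1 := I_mul_I
      linear_combination (-(I*I) * (w * (q:ℂ) * (-1:ℂ)^m)) * h1 +
        (-(w * (q:ℂ) * (-1:ℂ)^m)) * hI

theorem krebes_invariant_well_defined (p q k l : ℤ) (h : l ≡ k + 2 [ZMOD 4]) :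
    ∃ α β : ℤ,
      (∀ u v : ℤ, KrebesPair p q k l u v ↔ ((u = α ∧ v = β) ∨ (u = -α ∧ v = -β))) ∧
      ∀ α' β' : ℤ,
        (∀ u v : ℤ, KrebesPair p q k l u v ↔ ((u = α' ∧ v = β') ∨ (u = -α' ∧ v = -β'))) →
        ((α' = α ∧ β' = β) ∨ (α' = -α ∧ β' = -β)) := by
  have hd : (4:ℤ) ∣ l - (k+2) := Int.ModEq.dvd h.symm
  obtain ⟨m, hm'⟩ := hd
  have hm : l = k + 2 + 4 * m := by linarith
  obtain ⟨ε, hε1, hε2⟩ : ∃ ε : ℤ, ((ε:ℂ) = (-1:ℂ) ^ m) ∧ (ε = 1 ∨ ε = -1) := by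
    rcases Int.even_or_odd m with he | ho
    · exact ⟨1, by rw [he.neg_one_zpow]; norm_num, Or.inl rfl⟩
    · exact ⟨-1, by rw [ho.neg_one_zpow]; norm_num, Or.inr rfl⟩
  set β : ℤ := -ε * q with hβdef
  have hβ : (β : ℂ) = -((-1:ℂ) ^ m) * (q : ℂ) := by
    rw [hβdef, ← hε1]; push_cast; ring
  have main : ∀ u v : ℤ, KrebesPair p q k l u v ↔ ((u = p ∧ v = β) ∨ (u = -p ∧ v = -β)) := by
    intro u v
    rw [key p q k l m hm β hβ u v]
    constructor
    · rintro ⟨w, hw, hu, hv⟩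
      have hcases : w = 1 ∨ w = -1 ∨ (u = 0 ∧ v = 0 ∧ p = 0 ∧ β = 0) := by
        by_cases hp : p = 0
        · by_cases hq : q = 0
          · have hb0 : β = 0 := by rw [hβdef, hq, mul_zero]
            right; right
            refine ⟨?_, ?_, hp, hb0⟩
            · have : (u:ℂ) = 0 := by rw [hu, hp]; simp
              exact_mod_cast this
            · have : (v:ℂ) = 0 := by rw [hv, hb0]; simp
              exact_mod_cast this
          · have hb : β ≠ 0 := by
              rw [hβdef]; rcases hε2 with h1 | h1 <;> simp [h1, hq]
            rcases root_pm_one hw hb hv with h' | h'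
            · exact Or.inl h'
            · exact Or.inr (Or.inl h')
        · rcases root_pm_one hw hp hu with h' | h'
          · exact Or.inl h'
          · exact Or.inr (Or.inl h')
      rcases hcases with h' | h' | ⟨h1, h2, h3, h4⟩
      · subst h'
        left
        constructor
        · exact_mod_cast hu.trans (mul_one _)
        · exact_mod_cast hv.trans (mul_one _)
      · subst h'
        right
        constructor
        · have : (u:ℂ) = ((-p : ℤ) : ℂ) := by rw [hu]; push_cast; ring
          exact_mod_cast this
        · have : (v:ℂ) = ((-β : ℤ) : ℂ) := by rw [hv]; push_cast; ring
          exact_mod_cast this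
      · left; constructor
        · rw [h1, h3]
        · rw [h2, h4]
    · rintro (⟨h1, h2⟩ | ⟨h1, h2⟩)
      · exact ⟨1, one_pow 8, by rw [h1, mul_one], by rw [h2, mul_one]⟩
      · refine ⟨-1, by norm_num, ?_, ?_⟩
        · rw [h1]; push_cast; ring
        · rw [h2]; push_cast; ring
  refine ⟨p, β, main, ?_⟩
  intro α' β' h'
  have hk : KrebesPair p q k l α' β' := (h' α' β').mpr (Or.inl ⟨rfl, rfl⟩)
  exact (main α' β').mp hk
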